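/- With notation as follows, fix integers a, b, ℓ with 1 ≤ a ≤ b ≤ n, a + b ≤ n, ℓ ≠ 0, and 1 ≤ a+ℓ ≤ b−ℓ ≤ n. Define ψ(B,C) := Σ_{i=1}^{n−1}(BC)_{i,i+1}, let B_{pq} := E_{pq}+E_{qp} for p < q and B_{pp} := E_{pp}, and let C_{pq} := E_{pq} − E_{qp} if 1 ≤ p < q ≤ n and C_{pq} := 0 otherwise. Then Σ_{k=0}^{n} ψ(B_{a+ℓ, b−ℓ}, C_{a−k, b+k+1}) = 0. -/

import Mathlib

open Finset Matrix

/-- The elementary matrix `E_{pq}` in 1-based indexing, defined to be `0`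
unless `1 ≤ p, q ≤ n`. -/
noncomputable def Eint (n : ℕ) (p q : ℤ) : Matrix (Fin n) (Fin n) ℂ :=
  if h : 1 ≤ p ∧ p ≤ (n : ℤ) ∧ 1 ≤ q ∧ q ≤ (n : ℤ) then
    Matrix.single ⟨(p - 1).toNat, by omega⟩ ⟨(q - 1).toNat, by omega⟩ 1
  else 0

/-- `B_{pq} = E_{pq} + E_{qp}` for `p < q`, `B_{pp} = E_{pp}`, and `0` otherwise. -/
noncomputable def Bmat (n : ℕ) (p q : ℤ) : Matrix (Fin n) (Fin n) ℂ :=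
  if p < q then Eint n p q + Eint n q p else if p = q then Eint n p p else 0

/-- `C_{pq} = E_{pq} - E_{qp}` if `1 ≤ p < q ≤ n`, and `0` otherwise. -/
noncomputable def Cmat (n : ℕ) (p q : ℤ) : Matrix (Fin n) (Fin n) ℂ :=
  if p < q then Eint n p q - Eint n q p else 0

/-- `ψ(B, C) = Σ_{i=1}^{n-1} (BC)_{i,i+1}`, the sum of the superdiagonal
entries of `B * C`. -/
noncomputable def psi (n : ℕ) (B C : Matrix (Fin n) (Fin n) ℂ) : ℂ :=
  ∑ i : Fin n, if h : (i : ℕ) + 1 < n then (B * C) i ⟨(i : ℕ) + 1, h⟩ else 0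

lemma Eint_apply (n : ℕ) (p q : ℤ) (i j : Fin n) :
    Eint n p q i j = if ((i:ℤ) + 1 = p ∧ (j:ℤ) + 1 = q) then 1 else 0 := by
  unfold Eint
  split_ifs with h h2 h2
  · obtain ⟨hi, hj⟩ := h2
    simp only [Matrix.single, Matrix.of_apply]
    rw [if_pos]
    refine ⟨?_, ?_⟩ <;> · apply Fin.ext; simp only []; omega
  · simp only [Matrix.single, Matrix.of_apply]
    rw [if_neg]
    rintro ⟨hi, hj⟩
    have h3 := Fin.ext_iff.mp hi
    have h4 := Fin.ext_iff.mp hj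
    simp only [] at h3 h4
    exact h2 ⟨by omega, by omega⟩
  · exfalso; apply h
    have := i.isLt; have := j.isLt
    refine ⟨by omega, by omega, by omega, by omega⟩
  · simp

noncomputable def trsup (n : ℕ) (A : Matrix (Fin n) (Fin n) ℂ) : ℂ :=
  ∑ i : Fin n, if h : (i : ℕ) + 1 < n then A i ⟨(i : ℕ) + 1, h⟩ else 0

lemma trsup_sub (n : ℕ) (A B : Matrix (Fin n) (Fin n) ℂ) :
    trsup n (A - B) = trsup n A - trsup n B := by
  unfold trsup
  rw [← Finset.sum_sub_distrib]
  apply Finset.sum_congr rfl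
  intro i _
  split <;> simp

lemma trsup_zero (n : ℕ) : trsup n (0 : Matrix (Fin n) (Fin n) ℂ) = 0 := by
  unfold trsup; apply Finset.sum_eq_zero; intro i _; split <;> simp

lemma trsup_EE (n : ℕ) (p q u v : ℤ) :
    trsup n (Eint n p q * Eint n u v) =
      if q = u ∧ 1 ≤ q ∧ q ≤ (n:ℤ) ∧ v = p + 1 ∧ 1 ≤ p ∧ v ≤ (n:ℤ) then 1 else 0 := by
  have key : ∀ i : Fin n, ∀ h : (i:ℕ) + 1 < n,
      (Eint n p q * Eint n u v) i ⟨(i:ℕ)+1, h⟩ =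
      if ((i:ℤ) + 1 = p ∧ q = u ∧ 1 ≤ q ∧ q ≤ (n:ℤ) ∧ ((i:ℤ) + 2 = v)) then 1 else 0 := by
    intro i h
    rw [Matrix.mul_apply]
    by_cases hc : ((i:ℤ) + 1 = p ∧ q = u ∧ 1 ≤ q ∧ q ≤ (n:ℤ) ∧ ((i:ℤ) + 2 = v))
    · rw [if_pos hc]
      obtain ⟨hp, hqu, hq1, hqn, hv⟩ := hc
      rw [Finset.sum_eq_single (⟨(q-1).toNat, by omega⟩ : Fin n)]
      · rw [Eint_apply, Eint_apply,
          if_pos (⟨by fin_omega, by fin_omega⟩ : _ ∧ _),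
          if_pos (⟨by fin_omega, by fin_omega⟩ : _ ∧ _), one_mul]
      · intro b _ hb
        rw [Eint_apply, Eint_apply]
        rcases eq_or_ne ((b:ℤ)+1) q with hbq | hbq
        · exfalso; apply hb; apply Fin.ext; simp only []; omega
        · rw [if_neg (by tauto), zero_mul]
      · intro habs; exact absurd (Finset.mem_univ _) habs
    · rw [if_neg hc]
      apply Finset.sum_eq_zero
      intro j _
      rw [Eint_apply, Eint_apply]
      by_cases h1 : ((i:ℤ) + 1 = p ∧ (j:ℤ) + 1 = q)
      · rw [if_pos h1, one_mul, if_neg]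
        rintro ⟨hju, hv⟩
        have := j.isLt
        exact hc ⟨h1.1, by omega, by omega, by omega, by push_cast at hv ⊢; omega⟩
      · rw [if_neg h1, zero_mul]
  unfold trsup
  by_cases hc : q = u ∧ 1 ≤ q ∧ q ≤ (n:ℤ) ∧ v = p + 1 ∧ 1 ≤ p ∧ v ≤ (n:ℤ)
  · rw [if_pos hc]
    obtain ⟨hqu, hq1, hqn, hv, hp1, hvn⟩ := hc
    rw [Finset.sum_eq_single (⟨(p-1).toNat, by omega⟩ : Fin n)]
    · rw [dif_pos (by simp only []; omega), key, if_pos]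
      refine ⟨by simp only []; omega, hqu, hq1, hqn, by simp only []; omega⟩
    · intro b _ hb
      by_cases hbn : (b:ℕ) + 1 < n
      · rw [dif_pos hbn, key, if_neg]
        rintro ⟨hbp, -⟩
        exact hb (Fin.ext (by simp only []; omega))
      · rw [dif_neg hbn]
    · intro habs; exact absurd (Finset.mem_univ _) habs
  · rw [if_neg hc]
    apply Finset.sum_eq_zero
    intro i _
    by_cases hin : (i:ℕ) + 1 < n
    · rw [dif_pos hin, key, if_neg]
      rintro ⟨hp, hqu, hq1, hqn, hv⟩
      exact hc ⟨hqu, hq1, hqn, by omega, by omega, by omega⟩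
    · rw [dif_neg hin]
lemma trsup_add (n : ℕ) (A B : Matrix (Fin n) (Fin n) ℂ) :
    trsup n (A + B) = trsup n A + trsup n B := by
  unfold trsup
  rw [← Finset.sum_add_distrib]
  apply Finset.sum_congr rfl
  intro i _
  split <;> simp

lemma psi_eq_trsup (n : ℕ) (B C : Matrix (Fin n) (Fin n) ℂ) :
    psi n B C = trsup n (B * C) := rfl

lemma psi_E_C (n : ℕ) (p q u v : ℤ) (huv : u < v) :
    psi n (Eint n p q) (Cmat n u v) =
      (if q = u ∧ 1 ≤ q ∧ q ≤ (n:ℤ) ∧ v = p + 1 ∧ 1 ≤ p ∧ v ≤ (n:ℤ) then 1 else 0)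
      - (if q = v ∧ 1 ≤ q ∧ q ≤ (n:ℤ) ∧ u = p + 1 ∧ 1 ≤ p ∧ u ≤ (n:ℤ) then 1 else 0) := by
  have hC : Cmat n u v = Eint n u v - Eint n v u := by unfold Cmat; rw [if_pos huv]
  rw [psi_eq_trsup, hC, mul_sub, trsup_sub, trsup_EE, trsup_EE]

lemma sum_delta (n : ℕ) (c : ℤ) :
    (∑ k ∈ Finset.range (n+1), if (k:ℤ) = c then (1:ℂ) else 0) =
      if 0 ≤ c ∧ c ≤ (n:ℤ) then 1 else 0 := by
  by_cases h : 0 ≤ c ∧ c ≤ (n:ℤ)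
  · rw [if_pos h, Finset.sum_eq_single c.toNat]
    · rw [if_pos (by omega)]
    · intro b _ hb; rw [if_neg (by omega)]
    · intro h'; exact absurd (Finset.mem_range.mpr (by omega)) h'
  · rw [if_neg h]
    apply Finset.sum_eq_zero
    intro k hk
    have := Finset.mem_range.mp hk
    rw [if_neg (by omega)]

theorem zeta_s_sbar_offdiag (n a b : ℕ) (ℓ : ℤ)
    (h1 : 1 ≤ a) (h2 : a ≤ b) (h3 : b ≤ n) (h4 : a + b ≤ n)
    (hℓ : ℓ ≠ 0) (h5 : 1 ≤ (a : ℤ) + ℓ) (h6 : (a : ℤ) + ℓ ≤ (b : ℤ) - ℓ)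
    (h7 : (b : ℤ) - ℓ ≤ (n : ℤ)) :
    ∑ k ∈ Finset.range (n + 1),
      psi n (Bmat n ((a : ℤ) + ℓ) ((b : ℤ) - ℓ))
        (Cmat n ((a : ℤ) - k) ((b : ℤ) + k + 1)) = 0 := by
  have key : ∀ k ∈ Finset.range (n + 1),
      psi n (Bmat n ((a : ℤ) + ℓ) ((b : ℤ) - ℓ))
        (Cmat n ((a : ℤ) - k) ((b : ℤ) + k + 1)) =
      (if (k:ℤ) = -ℓ then (1:ℂ) else 0) - (if (k:ℤ) = -ℓ - 1 then 1 else 0) := by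
    intro k hk
    have hk' := Finset.mem_range.mp hk
    have huv : (a:ℤ) - k < (b:ℤ) + k + 1 := by omega
    by_cases hpq : (a:ℤ) + ℓ < (b:ℤ) - ℓ
    · have hB : Bmat n ((a:ℤ) + ℓ) ((b:ℤ) - ℓ) =
          Eint n ((a:ℤ) + ℓ) ((b:ℤ) - ℓ) + Eint n ((b:ℤ) - ℓ) ((a:ℤ) + ℓ) := by
        unfold Bmat; rw [if_pos hpq]
      rw [hB, psi_eq_trsup, add_mul, trsup_add, ← psi_eq_trsup, ← psi_eq_trsup,
        psi_E_C _ _ _ _ _ huv, psi_E_C _ _ _ _ _ huv]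
      split_ifs <;> ((try (exfalso; omega)) <;> norm_num)
    · have hpq' : (a:ℤ) + ℓ = (b:ℤ) - ℓ := le_antisymm h6 (not_lt.mp hpq)
      have hB : Bmat n ((a:ℤ) + ℓ) ((b:ℤ) - ℓ) =
          Eint n ((a:ℤ) + ℓ) ((a:ℤ) + ℓ) := by
        unfold Bmat; rw [if_neg hpq, if_pos hpq']
      rw [hB, psi_E_C _ _ _ _ _ huv]
      split_ifs <;> ((try (exfalso; omega)) <;> norm_num)
  rw [Finset.sum_congr rfl key, Finset.sum_sub_distrib, sum_delta, sum_delta]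
  split_ifs <;> ((try (exfalso; omega)) <;> norm_num)
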